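/- If there exist both a Sierpiński set and a Lusin set of cardinality 2^{ℵ₀}, then 2^{ℵ₀} = ℵ₁. -/

import Mathlib

open Set Filter Topology TopologicalSpace

/-- `𝒰` is an open cover of the space `Z`. -/
def IsOpenCover {Z : Type*} [TopologicalSpace Z] (𝒰 : Set (Set Z)) : Prop :=
  (∀ U ∈ 𝒰, IsOpen U) ∧ ⋃₀ 𝒰 = univ

/-- `𝒰` is an ω-cover: an open cover, not containing the whole space,
such that every finite subset of the space is contained in a member. -/
def IsOmegaCover {Z : Type*} [TopologicalSpace Z] (𝒰 : Set (Set Z)) : Prop :=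
  IsOpenCover 𝒰 ∧ univ ∉ 𝒰 ∧ ∀ F : Set Z, F.Finite → ∃ U ∈ 𝒰, F ⊆ U

/-- The Menger property `S_fin(𝒪,𝒪)`. -/
def Menger (Z : Type*) [TopologicalSpace Z] : Prop :=
  ∀ 𝒰 : ℕ → Set (Set Z), (∀ n, IsOpenCover (𝒰 n)) →
    ∃ 𝒱 : ℕ → Set (Set Z), (∀ n, (𝒱 n).Finite ∧ 𝒱 n ⊆ 𝒰 n) ∧ ⋃₀ (⋃ n, 𝒱 n) = univ

/-- The Rothberger property `S_1(𝒪,𝒪)`. -/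
def Rothberger (Z : Type*) [TopologicalSpace Z] : Prop :=
  ∀ 𝒰 : ℕ → Set (Set Z), (∀ n, IsOpenCover (𝒰 n)) →
    ∃ U : ℕ → Set Z, (∀ n, U n ∈ 𝒰 n) ∧ (⋃ n, U n) = univ

/-- Selective screenability `S_c(𝒪,𝒪)`. -/
def SelScreenable (Z : Type*) [TopologicalSpace Z] : Prop :=
  ∀ 𝒰 : ℕ → Set (Set Z), (∀ n, IsOpenCover (𝒰 n)) →
    ∃ 𝒱 : ℕ → Set (Set Z),
      (∀ n, (𝒱 n).PairwiseDisjoint id ∧ (∀ V ∈ 𝒱 n, IsOpen V) ∧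
        (∀ V ∈ 𝒱 n, ∃ U ∈ 𝒰 n, V ⊆ U)) ∧
      ⋃₀ (⋃ n, 𝒱 n) = univ

/-- The Hurewicz property. -/
def Hurewicz (Z : Type*) [TopologicalSpace Z] : Prop :=
  ∀ 𝒰 : ℕ → Set (Set Z), (∀ n, IsOpenCover (𝒰 n)) →
    ∃ 𝒱 : ℕ → Set (Set Z), (∀ n, (𝒱 n).Finite ∧ 𝒱 n ⊆ 𝒰 n) ∧
      ∀ z : Z, ∀ᶠ n in atTop, z ∈ ⋃₀ 𝒱 n

/-- `𝒰` is a γ-cover: an infinite family of open sets such that every point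
lies in all but finitely many members. -/
def IsGammaCover {Z : Type*} [TopologicalSpace Z] (𝒰 : Set (Set Z)) : Prop :=
  𝒰.Infinite ∧ (∀ U ∈ 𝒰, IsOpen U) ∧ ∀ z : Z, {U ∈ 𝒰 | z ∉ U}.Finite

/-- `S_1(Ω,Γ)`: from every sequence of ω-covers one can pick one member each
so that the selections form a γ-cover (the γ-set property). -/
def S1OmegaGamma (Z : Type*) [TopologicalSpace Z] : Prop :=
  ∀ 𝒰 : ℕ → Set (Set Z), (∀ n, IsOmegaCover (𝒰 n)) →
    ∃ U : ℕ → Set Z, (∀ n, U n ∈ 𝒰 n) ∧ IsGammaCover (range U)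

/-- `S_1(Ω,𝒪^gp)`: from every sequence of ω-covers one can pick one member each
so that the selections form a groupable cover. -/
def S1OmegaGp (Z : Type*) [TopologicalSpace Z] : Prop :=
  ∀ 𝒰 : ℕ → Set (Set Z), (∀ n, IsOmegaCover (𝒰 n)) →
    ∃ V : ℕ → Set Z, (∀ n, V n ∈ 𝒰 n) ∧
      ∃ f : ℕ → ℕ, StrictMono f ∧
        ∀ z : Z, ∀ᶠ k in atTop, ∃ j ∈ Set.Ico (f k) (f (k + 1)), z ∈ V j

/-- TWO has a winning strategy in the length-`α` game `G_1^α(𝒪,𝒪)` on `Z`: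
a history-dependent selection rule whose picks are legal and cover `Z`
whenever ONE plays open covers. -/
def TwoWinsG1 (Z : Type*) [TopologicalSpace Z] (α : Ordinal.{0}) : Prop :=
  ∃ σ : (Ordinal.{0} → Set (Set Z)) → Ordinal.{0} → Set Z,
    (∀ O O' : Ordinal.{0} → Set (Set Z), ∀ γ, (∀ β ≤ γ, O β = O' β) → σ O γ = σ O' γ) ∧
    ∀ O : Ordinal.{0} → Set (Set Z), (∀ γ, γ < α → IsOpenCover (O γ)) →
      (∀ γ, γ < α → σ O γ ∈ O γ) ∧ ∀ z : Z, ∃ γ, γ < α ∧ z ∈ σ O γ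

/-- TWO has a winning strategy in the length-`α` game `G_fin^α(𝒪,𝒪)` on `Z`. -/
def TwoWinsGfin (Z : Type*) [TopologicalSpace Z] (α : Ordinal.{0}) : Prop :=
  ∃ σ : (Ordinal.{0} → Set (Set Z)) → Ordinal.{0} → Set (Set Z),
    (∀ O O' : Ordinal.{0} → Set (Set Z), ∀ γ, (∀ β ≤ γ, O β = O' β) → σ O γ = σ O' γ) ∧
    ∀ O : Ordinal.{0} → Set (Set Z), (∀ γ, γ < α → IsOpenCover (O γ)) →
      (∀ γ, γ < α → (σ O γ).Finite ∧ σ O γ ⊆ O γ) ∧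
      ∀ z : Z, ∃ γ, γ < α ∧ z ∈ ⋃₀ σ O γ

/-- A Lusin set: an uncountable set of reals meeting every nowhere dense set
in a countable set. -/
def IsLusin (L : Set ℝ) : Prop :=
  ¬ L.Countable ∧ ∀ N : Set ℝ, IsNowhereDense N → (L ∩ N).Countable

/-- A Sierpiński set: an uncountable set of reals meeting every Lebesgue null
set in a countable set. -/
def IsSierpinski (S : Set ℝ) : Prop :=
  ¬ S.Countable ∧ ∀ N : Set ℝ, MeasureTheory.volume N = 0 → (S ∩ N).Countable

open MeasureTheory Metric in
private lemma exists_null_residual_aux : ∃ D : Set ℝ, MeasurableSet D ∧ volume D = 0 ∧ D ∈ residual ℝ := by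
  set q : ℕ → ℝ := denseSeq ℝ with hq
  set U : ℕ → Set ℝ := fun n => ⋃ k, ball (q k) ((1/2:ℝ)^(n+k+1)) with hU
  have hUopen : ∀ n, IsOpen (U n) := fun n => isOpen_iUnion fun k => isOpen_ball
  have hUdense : ∀ n, Dense (U n) := by
    intro n
    refine (denseRange_denseSeq ℝ).mono ?_
    rintro x ⟨k, rfl⟩
    exact mem_iUnion.2 ⟨k, mem_ball_self (by positivity)⟩
  have hUvol : ∀ n, volume (U n) ≤ ENNReal.ofReal ((1/2:ℝ)^n * 2) := by
    intro n
    refine (measure_iUnion_le _).trans ?_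
    have h1 : ∀ k : ℕ, volume (ball (q k) ((1/2:ℝ)^(n+k+1)))
        = ENNReal.ofReal ((1/2:ℝ)^n * (1/2:ℝ)^k) := by
      intro k; rw [Real.volume_ball]; ring_nf
    simp_rw [h1]
    rw [← ENNReal.ofReal_tsum_of_nonneg (fun k => by positivity)
      (by simpa using (summable_geometric_two).mul_left ((1/2:ℝ)^n))]
    rw [tsum_mul_left, tsum_geometric_two]
  refine ⟨⋂ n, U n, MeasurableSet.iInter fun n => (hUopen n).measurableSet, ?_, ?_⟩
  · have h0 : Tendsto (fun n : ℕ => (1/2:ℝ)^n * 2) atTop (nhds 0) := by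
      simpa using (tendsto_pow_atTop_nhds_zero_of_lt_one (r := (1/2:ℝ)) (by norm_num) (by norm_num)).mul_const (2:ℝ)
    have h1 : Tendsto (fun n : ℕ => ENNReal.ofReal ((1/2:ℝ)^n * 2)) atTop (nhds 0) := by
      simpa using ENNReal.tendsto_ofReal h0
    exact le_antisymm (ge_of_tendsto' h1
      fun n => le_trans (measure_mono (iInter_subset _ n)) (hUvol n)) zero_le
  · rw [mem_residual_iff]
    exact ⟨range U, by rintro t ⟨n, rfl⟩; exact hUopen n,
      by rintro t ⟨n, rfl⟩; exact hUdense n, countable_range U, by rw [sInter_range]⟩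

private lemma isNowhereDense_preimage_sub (x : ℝ) {F : Set ℝ} (hF : IsNowhereDense F) :
    IsNowhereDense ((fun y : ℝ => y - x) ⁻¹' F) := by
  have h : (fun y : ℝ => y - x) = (Homeomorph.addRight (-x)) := by
    funext y; simp [sub_eq_add_neg]
  rw [h]
  unfold IsNowhereDense at *
  rw [← Homeomorph.preimage_closure, ← Homeomorph.preimage_interior, hF, preimage_empty]

open MeasureTheory Metric in
/-- Rothberger: if there are both a Sierpiński set and a Lusin set of
cardinality `2^ℵ₀`, then `2^ℵ₀ = ℵ₁`. -/
theorem continuum_eq_aleph_one_of_sierpinski_and_lusin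
    (hS : ∃ S : Set ℝ, IsSierpinski S ∧ Cardinal.mk ↥S = Cardinal.continuum)
    (hL : ∃ L : Set ℝ, IsLusin L ∧ Cardinal.mk ↥L = Cardinal.continuum) :
    Cardinal.continuum = Cardinal.aleph 1 := by
  suffices h0 : Cardinal.continuum.{0} = Cardinal.aleph.{0} 1 by
    calc Cardinal.continuum = Cardinal.lift Cardinal.continuum.{0} :=
          Cardinal.lift_continuum.symm
      _ = Cardinal.lift (Cardinal.aleph.{0} 1) := by rw [h0]
      _ = Cardinal.aleph 1 := by rw [Cardinal.lift_aleph, Ordinal.lift_one]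
  obtain ⟨S, ⟨-, hSier⟩, hScard⟩ := hS
  obtain ⟨L, ⟨-, hLus⟩, hLcard⟩ := hL
  refine le_antisymm ?_ Cardinal.aleph_one_le_continuum
  -- a meagre set with null complement
  obtain ⟨D, hDmeas, hDnull, hDres⟩ := exists_null_residual_aux
  have hM : IsMeagre Dᶜ := by rwa [IsMeagre, compl_compl]
  obtain ⟨T, hTnwd, hTct, hMT⟩ := isMeagre_iff_countable_union_isNowhereDense.mp hM
  -- an ℵ₁-sized subset of the Sierpiński set
  obtain ⟨S', hS'sub, hS'card⟩ : ∃ p : Set ℝ, p ⊆ S ∧ Cardinal.mk ↥p = Cardinal.aleph 1 :=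
    Cardinal.le_mk_iff_exists_subset.mp (hScard ▸ Cardinal.aleph_one_le_continuum)
  -- the translates of ⋃₀ T by S' cover ℝ
  have key : ∀ z : ℝ, ∃ x ∈ S', ∃ F ∈ T, z - x ∈ F := by
    intro z
    by_contra hcon
    push_neg at hcon
    have hsub : S' ⊆ S ∩ ((fun x : ℝ => z - x) ⁻¹' D) := by
      intro x hx
      refine ⟨hS'sub hx, ?_⟩
      by_contra hxd
      exact absurd (hMT hxd) (fun ⟨F, hF, hzF⟩ => hcon x hx F hF hzF)
    have hpre : volume ((fun x : ℝ => z - x) ⁻¹' D) = 0 := by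
      rw [(Measure.measurePreserving_sub_left volume z).measure_preimage hDmeas.nullMeasurableSet]
      exact hDnull
    have hct : (S ∩ ((fun x : ℝ => z - x) ⁻¹' D)).Countable := hSier _ hpre
    have : Cardinal.mk ↥S' ≤ Cardinal.aleph0 :=
      le_trans (Cardinal.mk_le_mk_of_subset hsub) (Cardinal.mk_le_aleph0_iff.mpr hct.to_subtype)
    rw [hS'card] at this
    exact absurd this (not_le.mpr Cardinal.aleph0_lt_aleph_one)
  -- decompose L into countably-per-piece pieces indexed by S' × T
  have hLsub : L ⊆ ⋃ p : ↥S' × ↥T, (L ∩ ((fun y : ℝ => y - (p.1 : ℝ)) ⁻¹' (p.2 : Set ℝ))) := by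
    intro y hy
    obtain ⟨x, hx, F, hF, hyF⟩ := key y
    exact mem_iUnion.2 ⟨(⟨x, hx⟩, ⟨F, hF⟩), hy, hyF⟩
  have hpiece : ∀ p : ↥S' × ↥T,
      Cardinal.mk ↥(L ∩ ((fun y : ℝ => y - (p.1 : ℝ)) ⁻¹' (p.2 : Set ℝ))) ≤ Cardinal.aleph0 := by
    intro p
    exact Cardinal.mk_le_aleph0_iff.mpr
      ((hLus _ (isNowhereDense_preimage_sub _ (hTnwd _ p.2.2))).to_subtype)
  calc Cardinal.continuum = Cardinal.mk ↥L := hLcard.symm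
    _ ≤ Cardinal.mk ↥(⋃ p : ↥S' × ↥T, (L ∩ ((fun y : ℝ => y - (p.1 : ℝ)) ⁻¹' (p.2 : Set ℝ)))) :=
        Cardinal.mk_le_mk_of_subset hLsub
    _ ≤ Cardinal.sum (fun p : ↥S' × ↥T =>
          Cardinal.mk ↥(L ∩ ((fun y : ℝ => y - (p.1 : ℝ)) ⁻¹' (p.2 : Set ℝ)))) :=
        Cardinal.mk_iUnion_le_sum_mk
    _ ≤ Cardinal.sum (fun _ : ↥S' × ↥T => Cardinal.aleph0) := Cardinal.sum_le_sum _ _ hpiece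
    _ = Cardinal.mk (↥S' × ↥T) * Cardinal.aleph0 := Cardinal.sum_const' _ _
    _ ≤ (Cardinal.aleph 1 * Cardinal.aleph0) * Cardinal.aleph0 := by
        refine mul_le_mul' (le_of_eq_of_le (Cardinal.mk_prod _ _) ?_) le_rfl
        simp only [Cardinal.lift_id]
        exact mul_le_mul' (le_of_eq hS'card)
          (Cardinal.mk_le_aleph0_iff.mpr hTct.to_subtype)
    _ = Cardinal.aleph 1 := by
        rw [Cardinal.mul_eq_left (Cardinal.aleph0_le_aleph 1)
            Cardinal.aleph0_lt_aleph_one.le Cardinal.aleph0_ne_zero,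
          Cardinal.mul_eq_left (Cardinal.aleph0_le_aleph 1)
            Cardinal.aleph0_lt_aleph_one.le Cardinal.aleph0_ne_zero]
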